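/- ARTS is unbiased: if (b, b') ~ B₂(σ(φ)) has marginals Bern(σ(φ)) and correlation ρ < 1, then E[(f(b) − f(b'))·(b − b')/(2(1−ρ))] = ∇_φ E_{b~Bern(σ(φ))}[f(b)] = (f(1) − f(0))·σ(φ)(1 − σ(φ)). -/

import Mathlib

noncomputable def sigmoid (x : ℝ) : ℝ := 1 / (1 + Real.exp (-x))

lemma sigmoid_hasDerivAt (x : ℝ) :
    HasDerivAt sigmoid (sigmoid x * (1 - sigmoid x)) x := by
  have he : HasDerivAt (fun t : ℝ => 1 + Real.exp (-t)) (-Real.exp (-x)) x := by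
    have := (Real.hasDerivAt_exp (-x)).comp x ((hasDerivAt_id x).neg)
    simpa using (this.const_add 1)
  have hne : 1 + Real.exp (-x) ≠ 0 := by positivity
  have h := he.inv hne
  unfold sigmoid
  simp only [one_div]
  refine h.congr_deriv ?_
  have hp : (1 + Real.exp (-x)) > 0 := by positivity
  field_simp
  ring

/-- ARTS is unbiased: its expectation is the gradient (f(1) − f(0))·σ(φ)(1 − σ(φ)). -/
theorem stmt_7 (φ ρ : ℝ) (f : Fin 2 → ℝ) (q : Fin 2 → Fin 2 → ℝ)
    (hq0 : ∀ a b, 0 ≤ q a b) (hq1 : ∑ a, ∑ b, q a b = 1)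
    (hm1 : q 1 0 + q 1 1 = sigmoid φ) (hm2 : q 0 1 + q 1 1 = sigmoid φ)
    (hρ : ρ = (q 1 1 - sigmoid φ ^ 2) / (sigmoid φ * (1 - sigmoid φ)))
    (hρ1 : ρ < 1) :
    (∑ a, ∑ b, q a b *
        ((f a - f b) * (((a : ℕ) : ℝ) - ((b : ℕ) : ℝ)) / (2 * (1 - ρ))))
      = (f 1 - f 0) * (sigmoid φ * (1 - sigmoid φ))
    ∧ HasDerivAt (fun t : ℝ => sigmoid t * f 1 + (1 - sigmoid t) * f 0)
        ((f 1 - f 0) * (sigmoid φ * (1 - sigmoid φ))) φ := by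
  have hs0 : 0 < sigmoid φ := by unfold sigmoid; positivity
  have hs1 : sigmoid φ < 1 := by
    unfold sigmoid
    rw [div_lt_one (by positivity)]
    linarith [Real.exp_pos (-φ)]
  set s := sigmoid φ with hsdef
  have hden : 0 < s * (1 - s) := by nlinarith
  have hlt : q 1 1 < s := by
    rw [hρ, div_lt_one hden] at hρ1
    nlinarith
  have h1ρ : 1 - ρ = (s - q 1 1) / (s * (1 - s)) := by
    rw [hρ]; have : s ≠ 0 := by linarith
    have : 1 - s ≠ 0 := by linarith
    field_simp; ring
  constructor
  · simp only [Fin.sum_univ_two, Fin.val_zero, Fin.val_one, Nat.cast_zero, Nat.cast_one]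
    rw [h1ρ]
    have hq01 : q 0 1 = s - q 1 1 := by linarith
    have hq10 : q 1 0 = s - q 1 1 := by linarith
    rw [hq01, hq10]
    have hne : s - q 1 1 ≠ 0 := by linarith
    field_simp
    ring
  · have h := sigmoid_hasDerivAt φ
    have h2 := ((h.mul_const (f 1)).add ((hasDerivAt_const φ (1:ℝ)).sub h |>.mul_const (f 0)))
    refine h2.congr_deriv ?_
    ring
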